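/- The sum over all even b ≥ 0 and even c ≥ 0 of ( ch SST_n(λ(0,b,c)) + ch SST_n(λ(0,b,c+1)) ) equals E_0 in ℤ[x_1,…,x_n]. (When a = 0 every tableau has residue 0, so no residue condition is imposed; all but finitely many summands vanish.) -/

import Mathlib

open MvPolynomial

/-- A semistandard tableau of skew shape `λ(a,b,c) = (2^{b+c},1^a)/(1^b)` with entries in
`{1,…,n}` (encoded as `Fin n`), given as a pair `T = (L, R)` of strictly increasing columns:
`L` of height `a+c` (occupying rows `b+1,…,a+b+c`) and `R` of height `b+c` (occupying rows
`1,…,b+c`), with the row condition `l_j ≤ r_{b+j}` for `1 ≤ j ≤ c` (here `0`-indexed). -/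
def IsTab (n a b c : ℕ) (T : (Fin (a + c) → Fin n) × (Fin (b + c) → Fin n)) : Prop :=
  StrictMono T.1 ∧ StrictMono T.2 ∧
    ∀ (j : ℕ) (_ : j < c) (h2 : j < a + c) (h3 : b + j < b + c),
      T.1 ⟨j, h2⟩ ≤ T.2 ⟨b + j, h3⟩

/-- The tableau obtained from `T` by sliding the right column `R` down by `k` positions
(`0 ≤ k ≤ min{a,b}`) is again semistandard, i.e. `l_j ≤ r_{b+j−k}` for all `1 ≤ j ≤ c+k`
(here `0`-indexed). -/
def Slides (n a b c : ℕ) (T : (Fin (a + c) → Fin n) × (Fin (b + c) → Fin n)) (k : ℕ) : Prop :=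
  k ≤ a ∧ k ≤ b ∧
    ∀ (j : ℕ) (_ : j < c + k) (h2 : j < a + c) (h3 : b + j - k < b + c),
      T.1 ⟨j, h2⟩ ≤ T.2 ⟨b + j - k, h3⟩

/-- The residue `𝔯_T`: the maximal `k` such that sliding `R` down by `k` positions keeps the
tableau semistandard (`k = 0` always qualifies for a semistandard tableau). -/
noncomputable def tabResidue (n a b c : ℕ)
    (T : (Fin (a + c) → Fin n) × (Fin (b + c) → Fin n)) : ℕ :=
  sSup {k | Slides n a b c T k}

/-- The weight monomial `x^T = (∏_j x_{l_j}) · (∏_i x_{r_i})` of a tableau `T`. -/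
noncomputable def tabWt (n a b c : ℕ) (T : (Fin (a + c) → Fin n) × (Fin (b + c) → Fin n)) :
    MvPolynomial (Fin n) ℤ :=
  (∏ j, X (T.1 j)) * (∏ i, X (T.2 i))

/-- The weight generating function `ch X = Σ_{T ∈ X} x^T` of a (finite) set of tableaux. -/
noncomputable def tabCh (n a b c : ℕ)
    (Xs : Set ((Fin (a + c) → Fin n) × (Fin (b + c) → Fin n))) : MvPolynomial (Fin n) ℤ :=
  ∑ᶠ T ∈ Xs, tabWt n a b c T

/-- The `j`-th elementary symmetric polynomial in `x_1, …, x_n` over `ℤ`, indexed by `j : ℤ`,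
with the conventions `e_0 = 1` and `e_j = 0` for `j < 0` or `j > n`. -/
noncomputable def eZ (n : ℕ) (j : ℤ) : MvPolynomial (Fin n) ℤ :=
  if 0 ≤ j then esymm (Fin n) ℤ j.toNat else 0

/-- `E_r = Σ_{i=0}^{n} e_i · e_{r+i}` for `r : ℤ`. -/
noncomputable def EZ (n : ℕ) (r : ℤ) : MvPolynomial (Fin n) ℤ :=
  ∑ i ∈ Finset.range (n + 1), eZ n i * eZ n (r + i)

namespace ChAux
open Finset

variable {n : ℕ}

/-- number of elements of `S` with value `< s` -/
def lowc (S : Finset (Fin n)) (s : ℕ) : ℕ := #(S.filter fun x : Fin n => (x : ℕ) < s)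

lemma lowc_zero (S : Finset (Fin n)) : lowc S 0 = 0 := by simp [lowc]

lemma lowc_mono (S : Finset (Fin n)) {s t : ℕ} (h : s ≤ t) : lowc S s ≤ lowc S t :=
  card_le_card (monotone_filter_right S (fun x _ hx => lt_of_lt_of_le hx h))

lemma lowc_le_card (S : Finset (Fin n)) (s : ℕ) : lowc S s ≤ S.card :=
  card_le_card (filter_subset _ _)

lemma lowc_of_ge (S : Finset (Fin n)) {s : ℕ} (h : n ≤ s) : lowc S s = S.card := by
  rw [lowc, filter_true_of_mem]
  intro x _
  exact lt_of_lt_of_le x.isLt h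

lemma lowc_succ_le (S : Finset (Fin n)) (s : ℕ) : lowc S (s + 1) ≤ lowc S s + 1 := by
  have hsub : S.filter (fun x : Fin n => (x : ℕ) < s + 1) ⊆
      S.filter (fun x : Fin n => (x : ℕ) < s) ∪ S.filter (fun x : Fin n => (x : ℕ) = s) := by
    intro x hx
    simp only [mem_filter, mem_union] at hx ⊢
    obtain ⟨h1, h2⟩ := hx
    by_cases hxs : (x : ℕ) < s
    · exact Or.inl ⟨h1, hxs⟩
    · exact Or.inr ⟨h1, by omega⟩
  have hone : #(S.filter fun x : Fin n => (x : ℕ) = s) ≤ 1 := by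
    apply card_le_one.2
    intro a ha b hb
    simp only [mem_filter] at ha hb
    exact Fin.ext (ha.2.trans hb.2.symm)
  calc lowc S (s + 1) ≤ #(S.filter (fun x : Fin n => (x : ℕ) < s) ∪ S.filter (fun x : Fin n => (x : ℕ) = s)) :=
        card_le_card hsub
    _ ≤ lowc S s + #(S.filter fun x : Fin n => (x : ℕ) = s) := card_union_le _ _
    _ ≤ lowc S s + 1 := by omega

lemma lt_lowc_iff {k : ℕ} {f : Fin k → Fin n} (hf : StrictMono f) (j : Fin k) (t : ℕ) :
    (j : ℕ) < lowc (Finset.image f Finset.univ) t ↔ (f j : ℕ) < t := by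
  constructor
  · intro h
    by_contra hc
    push_neg at hc
    have hsub : (Finset.image f Finset.univ).filter (fun x : Fin n => (x : ℕ) < t) ⊆
        Finset.image f (Finset.univ.filter fun i => i < j) := by
      intro x hx
      simp only [mem_filter, mem_image, mem_univ, true_and] at hx ⊢
      obtain ⟨⟨i, rfl⟩, hxt⟩ := hx
      refine ⟨i, ?_, rfl⟩
      by_contra hij
      push_neg at hij
      exact absurd (lt_of_le_of_lt (le_trans hc (hf.monotone hij)) hxt) (lt_irrefl _)
    have hcard : #(Finset.image f (Finset.univ.filter fun i => i < j)) ≤ (j : ℕ) := by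
      calc #(Finset.image f (Finset.univ.filter fun i => i < j))
          ≤ #(Finset.univ.filter fun i : Fin k => i < j) := card_image_le
        _ = (j : ℕ) := by
            have : (Finset.univ.filter fun i : Fin k => i < j) = Finset.Iio j := by
              ext i; simp
            rw [this, Fin.card_Iio]
    exact absurd (lt_of_lt_of_le h (le_trans (card_le_card hsub) hcard)) (lt_irrefl _)
  · intro h
    have hj1 : (j : ℕ) + 1 ≤ k := j.isLt
    have hsub : Finset.image (fun i : Fin ((j : ℕ) + 1) => f (Fin.castLE hj1 i)) Finset.univ ⊆
        (Finset.image f Finset.univ).filter (fun x : Fin n => (x : ℕ) < t) := by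
      intro x hx
      simp only [mem_image, mem_univ, true_and, mem_filter] at hx ⊢
      obtain ⟨i, rfl⟩ := hx
      refine ⟨⟨_, rfl⟩, ?_⟩
      have : Fin.castLE hj1 i ≤ j := by
        have := i.isLt
        exact Fin.mk_le_mk.mpr (by simpa using Nat.lt_succ_iff.1 this)
      exact lt_of_le_of_lt (show ((f (Fin.castLE hj1 i)) : ℕ) ≤ (f j : ℕ) from hf.monotone this) h
    have hcard : #(Finset.image (fun i : Fin ((j : ℕ) + 1) => f (Fin.castLE hj1 i)) Finset.univ)
        = (j : ℕ) + 1 := by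
      rw [card_image_of_injective _ (fun a b hab => ?_), card_univ, Fintype.card_fin]
      have := hf.injective hab
      exact Fin.ext (by simpa using congrArg Fin.val this)
    have := card_le_card hsub
    rw [hcard] at this
    simpa [lowc] using lt_of_lt_of_le (Nat.lt_succ_self _) this



/-- the residual condition for two columns -/
def cnd (b : ℕ) (A B : Finset (Fin n)) : Prop := ∀ s : ℕ, lowc B s ≤ b + lowc A s

/-- touching of the two lattice paths at threshold `s` -/
def tch (b : ℕ) (A B : Finset (Fin n)) (s : ℕ) : Prop := lowc B s = b + 1 + lowc A s

lemma exists_tch {b : ℕ} {A B : Finset (Fin n)} {s₀ : ℕ}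
    (h : b + 1 + lowc A s₀ ≤ lowc B s₀) : ∃ s, tch b A B s := by
  classical
  have h0 : ∃ s, b + 1 + lowc A s ≤ lowc B s := ⟨s₀, h⟩
  have hs1 : b + 1 + lowc A (Nat.find h0) ≤ lowc B (Nat.find h0) := Nat.find_spec h0
  obtain ⟨u, hu⟩ : ∃ u, Nat.find h0 = u + 1 := by
    rcases Nat.eq_zero_or_pos (Nat.find h0) with h | h
    · rw [h] at hs1
      have hb0 := lowc_zero B
      have ha0 := lowc_zero A
      omega
    · exact ⟨Nat.find h0 - 1, by omega⟩
  have hnu : ¬ (b + 1 + lowc A u ≤ lowc B u) := Nat.find_min h0 (by omega)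
  have h1 := lowc_succ_le B u
  have h2 := lowc_mono A (by omega : u ≤ u + 1)
  refine ⟨u + 1, ?_⟩
  rw [hu] at hs1
  unfold tch
  omega

/-- the first touching point -/
noncomputable def tau (b : ℕ) (p : Finset (Fin n) × Finset (Fin n)) : ℕ :=
  sInf {s | tch b p.1 p.2 s}

/-- the tail-swap involution -/
noncomputable def swp (b : ℕ) (p : Finset (Fin n) × Finset (Fin n)) :
    Finset (Fin n) × Finset (Fin n) :=
  (p.1.filter (fun x : Fin n => (x : ℕ) < tau b p) ∪
     p.2.filter (fun x : Fin n => ¬ (x : ℕ) < tau b p),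
   p.2.filter (fun x : Fin n => (x : ℕ) < tau b p) ∪
     p.1.filter (fun x : Fin n => ¬ (x : ℕ) < tau b p))

lemma tau_tch {b : ℕ} {A B : Finset (Fin n)} (hex : ∃ s, tch b A B s) :
    tch b A B (tau b (A, B)) := Nat.sInf_mem hex

lemma disj_lt_ge (A B : Finset (Fin n)) (t : ℕ) :
    Disjoint (A.filter (fun x : Fin n => (x : ℕ) < t))
      (B.filter (fun x : Fin n => ¬ (x : ℕ) < t)) := by
  rw [Finset.disjoint_left]
  intro x hx hx'
  simp only [mem_filter] at hx hx'
  exact hx'.2 hx.2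

lemma lowc_union (A B : Finset (Fin n)) (h : Disjoint A B) (u : ℕ) :
    lowc (A ∪ B) u = lowc A u + lowc B u := by
  unfold lowc
  rw [filter_union, card_union_of_disjoint]
  exact Finset.disjoint_filter_filter h

lemma lowc_filter_lt (A : Finset (Fin n)) (t u : ℕ) :
    lowc (A.filter (fun x : Fin n => (x : ℕ) < t)) u = lowc A (min u t) := by
  unfold lowc
  rw [filter_filter]
  congr 1
  ext x
  simp only [mem_filter]
  constructor
  · rintro ⟨h1, h2, h3⟩; exact ⟨h1, lt_min h3 h2⟩
  · rintro ⟨h1, h2⟩; exact ⟨h1, (lt_min_iff.1 h2).2, (lt_min_iff.1 h2).1⟩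

lemma lowc_filter_ge (B : Finset (Fin n)) (t u : ℕ) :
    lowc (B.filter (fun x : Fin n => ¬ (x : ℕ) < t)) u + lowc B (min u t) = lowc B u := by
  unfold lowc
  rw [filter_filter, ← card_union_of_disjoint]
  · congr 1
    ext x
    simp only [mem_filter, mem_union]
    constructor
    · rintro (⟨h1, h2, h3⟩ | ⟨h1, h2⟩)
      · exact ⟨h1, h3⟩
      · exact ⟨h1, lt_of_lt_of_le (lt_min_iff.1 h2).1 le_rfl⟩
    · rintro ⟨h1, h2⟩
      by_cases h3 : (x : ℕ) < t
      · exact Or.inr ⟨h1, lt_min h2 h3⟩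
      · exact Or.inl ⟨h1, h3, h2⟩
  · rw [Finset.disjoint_left]
    intro x hx hx'
    simp only [mem_filter] at hx hx'
    exact hx.2.1 (lt_min_iff.1 hx'.2).2

lemma card_split (B : Finset (Fin n)) (t : ℕ) :
    lowc B t + #(B.filter (fun x : Fin n => ¬ (x : ℕ) < t)) = #B := by
  unfold lowc
  rw [← card_union_of_disjoint (disj_lt_ge B B t)]
  congr 1
  ext x
  simp only [mem_union, mem_filter]
  by_cases hx : (x : ℕ) < t <;> simp [hx]

lemma card_swp1 {b : ℕ} (A B : Finset (Fin n)) :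
    #(swp b (A, B)).1 + lowc B (tau b (A, B)) = lowc A (tau b (A, B)) + #B := by
  have hd := disj_lt_ge A B (tau b (A, B))
  have h2 := card_split B (tau b (A, B))
  show #(_ ∪ _) + _ = _
  rw [card_union_of_disjoint hd]
  unfold lowc at h2 ⊢
  omega

lemma card_swp2 {b : ℕ} (A B : Finset (Fin n)) :
    #(swp b (A, B)).2 + lowc A (tau b (A, B)) = lowc B (tau b (A, B)) + #A := by
  have hd := disj_lt_ge B A (tau b (A, B))
  have h2 := card_split A (tau b (A, B))
  show #(_ ∪ _) + _ = _
  rw [card_union_of_disjoint hd]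
  unfold lowc at h2 ⊢
  omega

lemma tch_swp {b : ℕ} {A B : Finset (Fin n)} (hex : ∃ s, tch b A B s) (u : ℕ) :
    tch b (swp b (A, B)).1 (swp b (A, B)).2 u ↔ tch b A B u := by
  set t := tau b (A, B) with ht
  have htc : lowc B t = b + 1 + lowc A t := tau_tch hex
  have e1 : lowc (swp b (A, B)).1 u =
      lowc A (min u t) + lowc (B.filter (fun x : Fin n => ¬ (x : ℕ) < t)) u := by
    show lowc (_ ∪ _) u = _
    rw [lowc_union _ _ (disj_lt_ge A B t), lowc_filter_lt]
  have e2 : lowc (swp b (A, B)).2 u =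
      lowc B (min u t) + lowc (A.filter (fun x : Fin n => ¬ (x : ℕ) < t)) u := by
    show lowc (_ ∪ _) u = _
    rw [lowc_union _ _ (disj_lt_ge B A t), lowc_filter_lt]
  have e3 := lowc_filter_ge B t u
  have e4 := lowc_filter_ge A t u
  unfold tch
  rcases le_total u t with h | h
  · rw [min_eq_left h] at e1 e2 e3 e4
    have hBu : lowc B u ≤ lowc B t := lowc_mono B h
    have hAu : lowc A u ≤ lowc A t := lowc_mono A h
    omega
  · rw [min_eq_right h] at e1 e2 e3 e4
    have hBu : lowc B t ≤ lowc B u := lowc_mono B h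
    have hAu : lowc A t ≤ lowc A u := lowc_mono A h
    omega

lemma tau_swp {b : ℕ} {A B : Finset (Fin n)} (hex : ∃ s, tch b A B s) :
    tau b (swp b (A, B)) = tau b (A, B) := by
  have : {s | tch b (swp b (A, B)).1 (swp b (A, B)).2 s} = {s | tch b A B s} := by
    ext u; exact tch_swp hex u
  exact congrArg sInf this

lemma swp_swp {b : ℕ} {A B : Finset (Fin n)} (hex : ∃ s, tch b A B s) :
    swp b (swp b (A, B)) = (A, B) := by
  have htau : tau b (swp b (A, B)) = tau b (A, B) := tau_swp hex
  set t := tau b (A, B) with ht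
  have h1 : (swp b (swp b (A, B))).1 = A := by
    show ((swp b (A, B)).1.filter _ ∪ (swp b (A, B)).2.filter _) = A
    rw [htau]
    ext x
    simp only [swp, mem_union, mem_filter]
    simp only [← ht]
    by_cases hx : (x : ℕ) < t
    · simp [hx, not_le.mpr hx]
    · simp [hx, not_lt.mp hx]
  have h2 : (swp b (swp b (A, B))).2 = B := by
    show ((swp b (A, B)).2.filter _ ∪ (swp b (A, B)).1.filter _) = B
    rw [htau]
    ext x
    simp only [swp, mem_union, mem_filter]
    simp only [← ht]
    by_cases hx : (x : ℕ) < t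
    · simp [hx, not_le.mpr hx]
    · simp [hx, not_lt.mp hx]
  exact Prod.ext h1 h2

lemma swp_wt (b : ℕ) (A B : Finset (Fin n)) :
    (∏ x ∈ (swp b (A, B)).1, X x) * (∏ x ∈ (swp b (A, B)).2, X x) =
      ((∏ x ∈ A, X x) * ∏ x ∈ B, X x : MvPolynomial (Fin n) ℤ) := by
  set t := tau b (A, B) with ht
  show ((∏ x ∈ (_ ∪ _), X x) * ∏ x ∈ (_ ∪ _), X x : MvPolynomial (Fin n) ℤ) = _
  rw [prod_union (disj_lt_ge A B t), prod_union (disj_lt_ge B A t)]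
  rw [mul_mul_mul_comm, mul_comm (∏ x ∈ B.filter _, (X x : MvPolynomial (Fin n) ℤ)),
    mul_mul_mul_comm]
  rw [prod_filter_mul_prod_filter_not, prod_filter_mul_prod_filter_not]



lemma cnd_iff_bdd {b : ℕ} {A B : Finset (Fin n)} :
    cnd b A B ↔ ∀ s ≤ n, lowc B s ≤ b + lowc A s := by
  constructor
  · intro h s _; exact h s
  · intro h s
    rcases le_or_gt s n with hs | hs
    · exact h s hs
    · have h1 : lowc B s = lowc B n := by rw [lowc_of_ge B le_rfl, lowc_of_ge B (le_of_lt hs)]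
      have h2 : lowc A s = lowc A n := by rw [lowc_of_ge A le_rfl, lowc_of_ge A (le_of_lt hs)]
      rw [h1, h2]
      exact h n le_rfl

instance (b : ℕ) (A B : Finset (Fin n)) : Decidable (cnd b A B) :=
  decidable_of_iff' _ cnd_iff_bdd

lemma hex_of_not_cnd {b : ℕ} {A B : Finset (Fin n)} (h : ¬ cnd b A B) :
    ∃ s, tch b A B s := by
  unfold cnd at h
  push_neg at h
  obtain ⟨s, hs⟩ := h
  exact exists_tch (s₀ := s) (by omega)

lemma not_cnd_of_hex {b : ℕ} {A B : Finset (Fin n)} (h : ∃ s, tch b A B s) :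
    ¬ cnd b A B := by
  obtain ⟨s, hs⟩ := h
  intro hc
  have := hc s
  unfold tch at hs
  omega

lemma card_image_strictMono {k : ℕ} {f : Fin k → Fin n} (hf : StrictMono f) :
    #(Finset.image f Finset.univ) = k := by
  rw [card_image_of_injective _ hf.injective, card_univ, Fintype.card_fin]

lemma tab3_iff {b m : ℕ} {L : Fin (0 + m) → Fin n} {R : Fin (b + m) → Fin n}
    (hL : StrictMono L) (hR : StrictMono R) :
    (∀ (j : ℕ) (_ : j < m) (h2 : j < 0 + m) (h3 : b + j < b + m),
        L ⟨j, h2⟩ ≤ R ⟨b + j, h3⟩) ↔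
      cnd b (Finset.image L Finset.univ) (Finset.image R Finset.univ) := by
  have hcA : #(Finset.image L Finset.univ) = 0 + m := card_image_strictMono hL
  have hcB : #(Finset.image R Finset.univ) = b + m := card_image_strictMono hR
  constructor
  · intro hT s
    by_contra hc
    push_neg at hc
    have hjm : lowc (Finset.image L Finset.univ) s < 0 + m := by
      rcases lt_or_ge (lowc (Finset.image L Finset.univ) s) (0 + m) with h | h
      · exact h
      · exfalso
        have h2 := lowc_le_card (Finset.image R Finset.univ) s
        have h3 := lowc_le_card (Finset.image L Finset.univ) s
        omega
    set j := lowc (Finset.image L Finset.univ) s with hj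
    have h2 : j < 0 + m := hjm
    have h3 : b + j < b + m := by omega
    have hLj : ¬ ((L ⟨j, h2⟩ : ℕ) < s) := by
      rw [← lt_lowc_iff hL ⟨j, h2⟩ s]
      simp [← hj]
    have hRj : (R ⟨b + j, h3⟩ : ℕ) < s := by
      rw [← lt_lowc_iff hR ⟨b + j, h3⟩ s]
      show b + j < lowc (Finset.image R Finset.univ) s
      omega
    have hval : (L ⟨j, h2⟩ : ℕ) ≤ (R ⟨b + j, h3⟩ : ℕ) := hT j (by omega) h2 h3
    omega
  · intro hc j hj h2 h3
    by_contra hcon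
    push_neg at hcon
    have hcon' : (R ⟨b + j, h3⟩ : ℕ) < (L ⟨j, h2⟩ : ℕ) := hcon
    set s := (L ⟨j, h2⟩ : ℕ) with hs
    have hA : ¬ ((j : ℕ) < lowc (Finset.image L Finset.univ) s) := by
      rw [show (j : ℕ) = ((⟨j, h2⟩ : Fin (0 + m)) : ℕ) from rfl, lt_lowc_iff hL ⟨j, h2⟩ s]
      omega
    have hB : (b + j) < lowc (Finset.image R Finset.univ) s := by
      rw [show (b + j : ℕ) = ((⟨b + j, h3⟩ : Fin (b + m)) : ℕ) from rfl,
        lt_lowc_iff hR ⟨b + j, h3⟩ s]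
      exact hcon'
    have := hc s
    omega

lemma image_orderEmbOfFin (s : Finset (Fin n)) {k : ℕ} (h : s.card = k) :
    Finset.image (s.orderEmbOfFin h) Finset.univ = s := by
  apply Finset.coe_injective
  rw [coe_image, coe_univ, Set.image_univ, range_orderEmbOfFin]

/-- good pairs -/
noncomputable def GF (n b m : ℕ) : Finset (Finset (Fin n) × Finset (Fin n)) :=
  (powersetCard m (Finset.univ : Finset (Fin n)) ×ˢ powersetCard (b + m) Finset.univ).filter
    (fun p => cnd b p.1 p.2)

lemma tabCh_eq (b m : ℕ) :
    tabCh n 0 b m {T | IsTab n 0 b m T} =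
      ∑ p ∈ GF n b m, (∏ x ∈ p.1, X x) * ∏ x ∈ p.2, (X x : MvPolynomial (Fin n) ℤ) := by
  classical
  have hset : {T | IsTab n 0 b m T} =
      ↑(Finset.univ.filter (fun T => IsTab n 0 b m T)) := by
    ext T; simp
  rw [tabCh, hset, finsum_mem_coe_finset]
  have hpf1 : ∀ p ∈ GF n b m, p.1.card = 0 + m := by
    intro p hp
    have h1 := (mem_filter.1 hp).1
    rw [Finset.mem_product] at h1
    have := Finset.mem_powersetCard_univ.1 h1.1
    omega
  have hpf2 : ∀ p ∈ GF n b m, p.2.card = b + m := by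
    intro p hp
    have h1 := (mem_filter.1 hp).1
    rw [Finset.mem_product] at h1
    exact Finset.mem_powersetCard_univ.1 h1.2
  refine Finset.sum_bij'
    (i := fun T _ => (Finset.image T.1 Finset.univ, Finset.image T.2 Finset.univ))
    (j := fun p hp => (⇑(p.1.orderEmbOfFin (hpf1 p hp)), ⇑(p.2.orderEmbOfFin (hpf2 p hp))))
    ?_ ?_ ?_ ?_ ?_
  · intro T hT
    obtain ⟨h1, h2, h3⟩ := (mem_filter.1 hT).2
    rw [GF, mem_filter, Finset.mem_product]
    refine ⟨⟨?_, ?_⟩, (tab3_iff h1 h2).1 h3⟩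
    · rw [Finset.mem_powersetCard_univ, card_image_strictMono h1]
      omega
    · rw [Finset.mem_powersetCard_univ, card_image_strictMono h2]
  · intro p hp
    rw [mem_filter]
    refine ⟨mem_univ _, (p.1.orderEmbOfFin (hpf1 p hp)).strictMono,
      (p.2.orderEmbOfFin (hpf2 p hp)).strictMono, ?_⟩
    apply (tab3_iff (p.1.orderEmbOfFin (hpf1 p hp)).strictMono
      (p.2.orderEmbOfFin (hpf2 p hp)).strictMono).2
    rw [image_orderEmbOfFin, image_orderEmbOfFin]
    exact (mem_filter.1 hp).2
  · intro T hT
    obtain ⟨h1, h2, _⟩ := (mem_filter.1 hT).2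
    have e1 : T.1 = ⇑((Finset.image T.1 Finset.univ).orderEmbOfFin (card_image_strictMono h1)) :=
      orderEmbOfFin_unique _ (fun x => mem_image_of_mem _ (mem_univ x)) h1
    have e2 : T.2 = ⇑((Finset.image T.2 Finset.univ).orderEmbOfFin (card_image_strictMono h2)) :=
      orderEmbOfFin_unique _ (fun x => mem_image_of_mem _ (mem_univ x)) h2
    exact Prod.ext e1.symm e2.symm
  · intro p hp
    exact Prod.ext (by simp [image_orderEmbOfFin]) (by simp [image_orderEmbOfFin])
  · intro T hT
    rw [tabWt]
    rw [Finset.prod_image (by intro x _ y _ h; exact ((mem_filter.1 hT).2.1).injective h),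
      Finset.prod_image (by intro x _ y _ h; exact ((mem_filter.1 hT).2.2.1).injective h)]

lemma allSum (p q : ℕ) :
    ∑ r ∈ powersetCard p (Finset.univ : Finset (Fin n)) ×ˢ powersetCard q Finset.univ,
      ((∏ x ∈ r.1, X x) * ∏ x ∈ r.2, X x : MvPolynomial (Fin n) ℤ) =
      esymm (Fin n) ℤ p * esymm (Fin n) ℤ q := by
  rw [Finset.sum_product, esymm, esymm, Finset.sum_mul_sum]

lemma tabCh_zero (b : ℕ) :
    tabCh n 0 b 0 {T | IsTab n 0 b 0 T} =
      esymm (Fin n) ℤ 0 * esymm (Fin n) ℤ (b + 0) := by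
  rw [tabCh_eq, ← allSum 0 (b + 0), GF, filter_true_of_mem]
  intro p hp
  rw [Finset.mem_product] at hp
  have h2 := Finset.mem_powersetCard_univ.1 hp.2
  intro s
  have := lowc_le_card p.2 s
  omega

lemma tabCh_succ (b c : ℕ) :
    tabCh n 0 b (c + 1) {T | IsTab n 0 b (c + 1) T} =
      esymm (Fin n) ℤ (c + 1) * esymm (Fin n) ℤ (b + (c + 1)) -
        esymm (Fin n) ℤ c * esymm (Fin n) ℤ (b + c + 2) := by
  classical
  rw [tabCh_eq]
  have hsplit := Finset.sum_filter_add_sum_filter_not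
    (powersetCard (c + 1) (Finset.univ : Finset (Fin n)) ×ˢ
      powersetCard (b + (c + 1)) Finset.univ)
    (fun p => cnd b p.1 p.2)
    (fun p => (∏ x ∈ p.1, X x) * ∏ x ∈ p.2, (X x : MvPolynomial (Fin n) ℤ))
  have hbad : ∑ p ∈ (powersetCard (c + 1) (Finset.univ : Finset (Fin n)) ×ˢ
        powersetCard (b + (c + 1)) Finset.univ).filter (fun p => ¬ cnd b p.1 p.2),
        ((∏ x ∈ p.1, X x) * ∏ x ∈ p.2, X x : MvPolynomial (Fin n) ℤ) =
      ∑ p ∈ powersetCard c (Finset.univ : Finset (Fin n)) ×ˢ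
        powersetCard (b + c + 2) Finset.univ,
        ((∏ x ∈ p.1, X x) * ∏ x ∈ p.2, X x : MvPolynomial (Fin n) ℤ) := by
    refine Finset.sum_nbij' (i := swp b) (j := swp b) ?_ ?_ ?_ ?_ ?_
    · intro a ha
      obtain ⟨A, B⟩ := a
      rw [mem_filter, Finset.mem_product, Finset.mem_powersetCard_univ,
        Finset.mem_powersetCard_univ] at ha
      obtain ⟨⟨hc1, hc2⟩, hnc⟩ := ha
      dsimp only at hc1 hc2 hnc
      have hex := hex_of_not_cnd hnc
      have ht := tau_tch (A := A) (B := B) hex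
      have hc1' := card_swp1 (b := b) A B
      have hc2' := card_swp2 (b := b) A B
      have hla := lowc_le_card A (tau b (A, B))
      have hlb := lowc_le_card B (tau b (A, B))
      rw [Finset.mem_product, Finset.mem_powersetCard_univ, Finset.mem_powersetCard_univ]
      unfold tch at ht
      constructor
      · omega
      · omega
    · intro q hq
      obtain ⟨A, B⟩ := q
      rw [Finset.mem_product, Finset.mem_powersetCard_univ,
        Finset.mem_powersetCard_univ] at hq
      obtain ⟨hc1, hc2⟩ := hq
      dsimp only at hc1 hc2
      have hex : ∃ s, tch b A B s := by
        apply exists_tch (s₀ := n)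
        rw [lowc_of_ge A le_rfl, lowc_of_ge B le_rfl, hc1, hc2]
        omega
      have ht := tau_tch (A := A) (B := B) hex
      have hc1' := card_swp1 (b := b) A B
      have hc2' := card_swp2 (b := b) A B
      have hla := lowc_le_card A (tau b (A, B))
      have hlb := lowc_le_card B (tau b (A, B))
      rw [mem_filter, Finset.mem_product, Finset.mem_powersetCard_univ,
        Finset.mem_powersetCard_univ]
      unfold tch at ht
      refine ⟨⟨by omega, by omega⟩, ?_⟩
      apply not_cnd_of_hex
      refine ⟨tau b (A, B), ?_⟩
      exact (tch_swp hex (tau b (A, B))).2 (tau_tch hex)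
    · intro a ha
      obtain ⟨A, B⟩ := a
      rw [mem_filter] at ha
      exact swp_swp (hex_of_not_cnd ha.2)
    · intro q hq
      obtain ⟨A, B⟩ := q
      rw [Finset.mem_product, Finset.mem_powersetCard_univ,
        Finset.mem_powersetCard_univ] at hq
      dsimp only at hq
      apply swp_swp
      apply exists_tch (s₀ := n)
      rw [lowc_of_ge A le_rfl, lowc_of_ge B le_rfl, hq.1, hq.2]
      omega
    · intro a _
      obtain ⟨A, B⟩ := a
      exact (swp_wt b A B).symm
  rw [allSum] at hsplit
  rw [hbad] at hsplit
  rw [allSum] at hsplit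
  have h22 : b + c + 2 = b + c + 2 := rfl
  have := eq_sub_of_add_eq hsplit
  rw [GF]
  rw [this]



lemma esymm_eq_zero {k : ℕ} (h : n < k) : esymm (Fin n) ℤ k = 0 := by
  rw [esymm, Finset.powersetCard_eq_empty.2 (by simpa using h), Finset.sum_empty]

/-- `gg n b i = e_i e_{b+i}` -/
noncomputable def gg (n b i : ℕ) : MvPolynomial (Fin n) ℤ :=
  esymm (Fin n) ℤ i * esymm (Fin n) ℤ (b + i)

lemma gg_zero_i {b i : ℕ} (h : n < i) : gg n b i = 0 := by
  rw [gg, esymm_eq_zero h, zero_mul]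

lemma gg_zero_b {b i : ℕ} (h : n < b) : gg n b i = 0 := by
  rw [gg, esymm_eq_zero (lt_of_lt_of_le h (Nat.le_add_right b i)), mul_zero]

lemma tabCh_zero' (b : ℕ) :
    tabCh n 0 b 0 {T | IsTab n 0 b 0 T} = gg n b 0 := tabCh_zero b

lemma tabCh_succ' (b c : ℕ) :
    tabCh n 0 b (c + 1) {T | IsTab n 0 b (c + 1) T} = gg n b (c + 1) - gg n (b + 2) c := by
  rw [tabCh_succ]
  unfold gg
  have h : b + c + 2 = b + 2 + c := by omega
  rw [h]

lemma sum_range_even {M : Type*} [AddCommMonoid M] (f : ℕ → M) (N : ℕ) :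
    ∑ i ∈ Finset.range (2 * N), f i = ∑ k ∈ Finset.range N, (f (2 * k) + f (2 * k + 1)) := by
  induction N with
  | zero => simp
  | succ N ih =>
    have h : 2 * (N + 1) = 2 * N + 1 + 1 := by omega
    rw [h, Finset.sum_range_succ, Finset.sum_range_succ, ih, Finset.sum_range_succ]
    try rw [add_assoc]

lemma sum_range_odd {M : Type*} [AddCommMonoid M] (f : ℕ → M) (N : ℕ) :
    ∑ i ∈ Finset.range (2 * N + 1), f i =
      f 0 + ∑ k ∈ Finset.range N, (f (2 * k + 1) + f (2 * k + 2)) := by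
  rw [Finset.sum_range_succ']
  rw [sum_range_even (fun i => f (i + 1)) N]
  rw [add_comm]

lemma finsum_even_eq {M : Type*} [AddCommMonoid M] (h : ℕ → M) :
    (∑ᶠ (c : ℕ) (_ : Even c), h c) = ∑ᶠ k : ℕ, h (2 * k) := by
  have h1 : {c : ℕ | Even c} = Set.range (fun k : ℕ => 2 * k) := by
    ext c
    simp only [Set.mem_setOf_eq, Set.mem_range]
    constructor
    · rintro ⟨r, rfl⟩; exact ⟨r, by omega⟩
    · rintro ⟨r, rfl⟩; exact ⟨r, by omega⟩
  show ∑ᶠ c ∈ {c : ℕ | Even c}, h c = _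
  rw [h1, finsum_mem_range (fun a b hab => by omega)]

/-- partial sums of the diagonal products -/
noncomputable def Vv (n b : ℕ) : MvPolynomial (Fin n) ℤ :=
  ∑ i ∈ Finset.range (2 * n + 2), gg n b i

lemma Vv_zero {b : ℕ} (h : n < b) : Vv n b = 0 := by
  rw [Vv]
  apply Finset.sum_eq_zero
  intro i _
  exact gg_zero_b h

lemma inner_sum (b : ℕ) :
    (∑ᶠ (c : ℕ) (_ : Even c),
        (tabCh n 0 b c {T | IsTab n 0 b c T} +
          tabCh n 0 b (c + 1) {T | IsTab n 0 b (c + 1) T})) = Vv n b - Vv n (b + 2) := by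
  have hterm : ∀ k : ℕ,
      (tabCh n 0 b (2 * k) {T | IsTab n 0 b (2 * k) T} +
        tabCh n 0 b (2 * k + 1) {T | IsTab n 0 b (2 * k + 1) T}) =
      (gg n b (2 * k) + gg n b (2 * k + 1)) -
        Nat.rec (motive := fun _ => MvPolynomial (Fin n) ℤ) (gg n (b + 2) 0)
          (fun k _ => gg n (b + 2) (2 * k + 1) + gg n (b + 2) (2 * k + 2)) k := by
    intro k
    cases k with
    | zero =>
      show tabCh n 0 b 0 {T | IsTab n 0 b 0 T} +
          tabCh n 0 b (0 + 1) {T | IsTab n 0 b (0 + 1) T} =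
          (gg n b 0 + gg n b (0 + 1)) - gg n (b + 2) 0
      rw [tabCh_zero', tabCh_succ' b 0]
      ring
    | succ k =>
      show tabCh n 0 b ((2 * k + 1) + 1) {T | IsTab n 0 b ((2 * k + 1) + 1) T} +
          tabCh n 0 b ((2 * k + 2) + 1) {T | IsTab n 0 b ((2 * k + 2) + 1) T} =
          (gg n b ((2 * k + 1) + 1) + gg n b ((2 * k + 2) + 1)) -
            (gg n (b + 2) (2 * k + 1) + gg n (b + 2) (2 * k + 2))
      rw [tabCh_succ' b (2 * k + 1), tabCh_succ' b (2 * k + 2)]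
      ring
  rw [finsum_even_eq]
  rw [finsum_eq_sum_of_support_subset _ (s := Finset.range (n + 1)) ?_]
  · rw [Finset.sum_congr rfl (fun k _ => hterm k), Finset.sum_sub_distrib]
    congr 1
    · rw [← sum_range_even (gg n b) (n + 1), Vv,
        show 2 * (n + 1) = 2 * n + 2 from by omega]
    · rw [Finset.sum_range_succ']
      have h1 : ∑ i ∈ Finset.range n,
          (Nat.rec (motive := fun _ => MvPolynomial (Fin n) ℤ) (gg n (b + 2) 0)
            (fun k _ => gg n (b + 2) (2 * k + 1) + gg n (b + 2) (2 * k + 2)) (i + 1)) =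
          ∑ k ∈ Finset.range n, (gg n (b + 2) (2 * k + 1) + gg n (b + 2) (2 * k + 2)) :=
        Finset.sum_congr rfl (fun k _ => rfl)
      rw [h1]
      have h2 : Vv n (b + 2) = ∑ i ∈ Finset.range (2 * n + 1), gg n (b + 2) i := by
        rw [Vv, show 2 * n + 2 = (2 * n + 1) + 1 from rfl, Finset.sum_range_succ,
          gg_zero_i (by omega), add_zero]
      rw [h2, sum_range_odd (gg n (b + 2)) n]
      exact add_comm _ _
  · intro k hk
    simp only [Function.mem_support, ne_eq] at hk
    rw [Finset.mem_coe, Finset.mem_range]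
    by_contra hkr
    push_neg at hkr
    apply hk
    rw [hterm k]
    obtain ⟨k', rfl⟩ : ∃ k', k = k' + 1 := ⟨k - 1, by omega⟩
    rw [gg_zero_i (i := 2 * (k' + 1)) (by omega), gg_zero_i (i := 2 * (k' + 1) + 1) (by omega)]
    show (0 + 0 : MvPolynomial (Fin n) ℤ) -
        (gg n (b + 2) (2 * k' + 1) + gg n (b + 2) (2 * k' + 2)) = 0
    rw [gg_zero_i (by omega), gg_zero_i (by omega)]
    ring



lemma outer_sum :
    (∑ᶠ (b : ℕ) (_ : Even b) (c : ℕ) (_ : Even c),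
        (tabCh n 0 b c {T | IsTab n 0 b c T} +
          tabCh n 0 b (c + 1) {T | IsTab n 0 b (c + 1) T})) = Vv n 0 := by
  rw [finsum_even_eq]
  rw [finsum_congr (fun j => inner_sum (2 * j))]
  rw [finsum_eq_sum_of_support_subset _ (s := Finset.range (n + 1)) ?_]
  · have h := Finset.sum_range_sub' (f := fun j => Vv n (2 * j)) (n + 1)
    have h2 : (∑ i ∈ Finset.range (n + 1), (Vv n (2 * i) - Vv n (2 * i + 2))) =
        ∑ i ∈ Finset.range (n + 1),
          ((fun j => Vv n (2 * j)) i - (fun j => Vv n (2 * j)) (i + 1)) :=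
      Finset.sum_congr rfl (fun i _ => rfl)
    rw [h2, h]
    show Vv n (2 * 0) - Vv n (2 * (n + 1)) = Vv n 0
    rw [Vv_zero (by omega : n < 2 * (n + 1))]
    rw [sub_zero]
  · intro j hj
    simp only [Function.mem_support, ne_eq] at hj
    rw [Finset.mem_coe, Finset.mem_range]
    by_contra hjr
    push_neg at hjr
    apply hj
    rw [Vv_zero (by omega : n < 2 * j), Vv_zero (by omega : n < 2 * j + 2), sub_self]

lemma Vv_eq_EZ : Vv n 0 = EZ n 0 := by
  rw [Vv, EZ]
  rw [← Finset.sum_subset (Finset.range_subset_range.2 (by omega : n + 1 ≤ 2 * n + 2))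
    (fun i _ hi => gg_zero_i (by simp only [Finset.mem_range] at hi; omega))]
  apply Finset.sum_congr rfl
  intro i _
  rw [gg]
  simp [eZ]

end ChAux

/-- `Σ_{b,c≥0 even} ( ch SST_n(λ(0,b,c)) + ch SST_n(λ(0,b,c+1)) ) = E_0` in `ℤ[x_1,…,x_n]`.
(When `a = 0` every tableau has residue `0`, so no residue condition is imposed; all but
finitely many summands vanish.) -/
theorem ch_d_infinity_zero_sum (n : ℕ) (hn : 1 ≤ n) :
    (∑ᶠ (b : ℕ) (_ : Even b) (c : ℕ) (_ : Even c),
        (tabCh n 0 b c {T | IsTab n 0 b c T} +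
          tabCh n 0 b (c + 1) {T | IsTab n 0 b (c + 1) T})) =
      EZ n 0 := by
  rw [ChAux.outer_sum, ChAux.Vv_eq_EZ]
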